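/- (Corollary 3.6) Let X be a strong partitive set of an undirected graph G = (V,E) with X ≠ V, and let u ∈ V∖X. Then either (u,x) ∉ E for every x ∈ X, or there exists a color class Â of G such that (u,x) ∈ Â for every x ∈ X. -/

import Mathlib

open Set

namespace TransOrient

variable {V : Type*}

/-- `E` is the edge set of an undirected graph on the vertex type `V`:
an irreflexive and symmetric relation, given as a set of ordered pairs. -/
def IsGraph (E : Set (V × V)) : Prop :=
  (∀ a : V, (a, a) ∉ E) ∧ (∀ a b : V, (a, b) ∈ E ↔ (b, a) ∈ E)

/-- The forcing relation `Γ` on directed edges: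
`(a,b) Γ (a',b')` iff (`a = a'` and `(b,b') ∉ E`) or (`b = b'` and `(a,a') ∉ E`). -/
def Gamma (E : Set (V × V)) (e e' : V × V) : Prop :=
  e ∈ E ∧ e' ∈ E ∧
    ((e.1 = e'.1 ∧ (e.2, e'.2) ∉ E) ∨ (e.2 = e'.2 ∧ (e.1, e'.1) ∉ E))

/-- The implication classes of `G = (V,E)`: equivalence classes on `E` of
the reflexive-transitive closure of `Γ`. -/
def IsImplicationClass (E : Set (V × V)) (A : Set (V × V)) : Prop :=
  ∃ e ∈ E, A = {e' | Relation.ReflTransGen (Gamma E) e e'}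

/-- `A⁻¹ = {(b,a) : (a,b) ∈ A}`. -/
def inv (A : Set (V × V)) : Set (V × V) := {p | (p.2, p.1) ∈ A}

/-- The color class `Â = A ∪ A⁻¹` of an implication class `A`. -/
def hat (A : Set (V × V)) : Set (V × V) := A ∪ inv A

/-- `Ã`: the set of vertices incident to an edge of `A`. -/
def tilde (A : Set (V × V)) : Set V := {v | ∃ w, (v, w) ∈ A ∨ (w, v) ∈ A}

/-- A transitive orientation `E'` of a symmetric edge set `F`:
`E' ⊆ F`, `E' ∩ E'⁻¹ = ∅`, `E' ∪ E'⁻¹ = F` and `E'` is transitive. -/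
def IsTransOrientation (F E' : Set (V × V)) : Prop :=
  E' ⊆ F ∧ E' ∩ inv E' = ∅ ∧ E' ∪ inv E' = F ∧
    ∀ a b c : V, (a, b) ∈ E' → (b, c) ∈ E' → (a, c) ∈ E'

/-- `G` is a comparability graph if `E` admits a transitive orientation. -/
def IsComparability (E : Set (V × V)) : Prop :=
  ∃ E' : Set (V × V), IsTransOrientation E E'

/-- `E(X)`: the set of edges of `E` with both endpoints in `X`. -/
def edgesOn (E : Set (V × V)) (X : Set V) : Set (V × V) :=
  {p ∈ E | p.1 ∈ X ∧ p.2 ∈ X}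

/-- `X` is a partitive set of `G = (V,E)`. -/
def IsPartitive (E : Set (V × V)) (X : Set V) : Prop :=
  ∀ a ∈ X, ∀ b ∈ X, ∀ c ∉ X, ((a, c) ∈ E ↔ (b, c) ∈ E)

/-- `X` is a "strong" partitive set of `G = (V,E)`. -/
def IsStrongPartitive (E : Set (V × V)) (X : Set V) : Prop :=
  IsPartitive E X ∧
    ∀ Y : Set V, IsPartitive E Y → (Y ∩ X).Nonempty → X ⊆ Y ∨ Y ⊆ X

/-- `X` is a maximal "strong" partitive set of `G = (V,E)`: a strong partitive
set different from `V` which is maximal, for inclusion, among the strong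
partitive sets different from `V`. -/
def IsMaxStrongPartitive (E : Set (V × V)) (X : Set V) : Prop :=
  IsStrongPartitive E X ∧ X ≠ Set.univ ∧
    ∀ Y : Set V, IsStrongPartitive E Y → Y ≠ Set.univ → X ⊆ Y → X = Y

/-- `X` is a partitive set of the induced subgraph `G(W) = (W, E(W))`. -/
def IsPartitiveIn (E : Set (V × V)) (W : Set V) (X : Set V) : Prop :=
  X ⊆ W ∧ ∀ a ∈ X, ∀ b ∈ X, ∀ c ∈ W \ X,
    ((a, c) ∈ edgesOn E W ↔ (b, c) ∈ edgesOn E W)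

/-- `X` is a "strong" partitive set of the induced subgraph `G(W)`. -/
def IsStrongPartitiveIn (E : Set (V × V)) (W : Set V) (X : Set V) : Prop :=
  IsPartitiveIn E W X ∧
    ∀ Y : Set V, IsPartitiveIn E W Y → (Y ∩ X).Nonempty → X ⊆ Y ∨ Y ⊆ X

/-- `X` is a maximal "strong" partitive set of the induced subgraph `G(W)`. -/
def IsMaxStrongPartitiveIn (E : Set (V × V)) (W : Set V) (X : Set V) : Prop :=
  IsStrongPartitiveIn E W X ∧ X ≠ W ∧
    ∀ Y : Set V, IsStrongPartitiveIn E W Y → Y ≠ W → X ⊆ Y → X = Y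

/-- Two directed edges lie in the same color class of `G = (V,E)`. -/
def SameColor (E : Set (V × V)) (e e' : V × V) : Prop :=
  ∃ A : Set (V × V), IsImplicationClass E A ∧ e ∈ hat A ∧ e' ∈ hat A

/-- A simplex of `G = (V,E)` given by its (finite, nonempty) vertex set `VS`:
a complete induced subgraph whose edges, for distinct unordered pairs,
lie in distinct color classes of `G`. -/
def IsSimplex (E : Set (V × V)) (VS : Set V) : Prop :=
  VS.Finite ∧ VS.Nonempty ∧
    (∀ a ∈ VS, ∀ b ∈ VS, a ≠ b → (a, b) ∈ E) ∧
    (∀ a ∈ VS, ∀ b ∈ VS, ∀ c ∈ VS, ∀ d ∈ VS, a ≠ b → c ≠ d →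
      SameColor E (a, b) (c, d) → (a = c ∧ b = d) ∨ (a = d ∧ b = c))

/-- The rank of a simplex on `r+1` vertices is `r`. -/
noncomputable def simplexRank (VS : Set V) : ℕ := VS.ncard - 1

/-- A maximal simplex: its vertex set is not properly contained in the
vertex set of another simplex. -/
def IsMaxSimplex (E : Set (V × V)) (VS : Set V) : Prop :=
  IsSimplex E VS ∧ ∀ VS' : Set V, IsSimplex E VS' → VS ⊆ VS' → VS = VS'

/-- The multiplex `M(S)` generated by a simplex with vertex set `VS`:
the union of all color classes of `G` containing an edge of the simplex. -/
def multiplex (E : Set (V × V)) (VS : Set V) : Set (V × V) :=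
  {e | ∃ A : Set (V × V), IsImplicationClass E A ∧ e ∈ hat A ∧
    ∃ a ∈ VS, ∃ b ∈ VS, a ≠ b ∧ (a, b) ∈ hat A}

/-- A maximal multiplex of `G`: a multiplex generated by a maximal simplex. -/
def IsMaxMultiplex (E : Set (V × V)) (M : Set (V × V)) : Prop :=
  ∃ VS : Set V, IsMaxSimplex E VS ∧ M = multiplex E VS

/-- `P` is a partition of the set `W`. -/
def IsPartitionOf (W : Set V) (P : Set (Set V)) : Prop :=
  (∀ X ∈ P, X.Nonempty) ∧ ⋃₀ P = W ∧
    ∀ X ∈ P, ∀ Y ∈ P, X ≠ Y → X ∩ Y = ∅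

/-- Adjacency in the quotient of the induced subgraph `G(W)` by a partition:
two distinct blocks are adjacent iff some pair of representatives is an
edge of `E(W)`. -/
def quotAdj (E : Set (V × V)) (W : Set V) (X Y : Set V) : Prop :=
  X ≠ Y ∧ ∃ x ∈ X, ∃ y ∈ Y, (x, y) ∈ edgesOn E W

/-- A partitive set of an abstract graph with vertex set `W` and adjacency
relation `Adj`. -/
def IsPartitiveGen {α : Type*} (W : Set α) (Adj : α → α → Prop) (X : Set α) : Prop :=
  X ⊆ W ∧ ∀ a ∈ X, ∀ b ∈ X, ∀ c ∈ W \ X, (Adj a c ↔ Adj b c)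

/-- An abstract graph `(W, Adj)` is indecomposable if all its partitive
sets are trivial. -/
def IndecomposableGen {α : Type*} (W : Set α) (Adj : α → α → Prop) : Prop :=
  ∀ X : Set α, IsPartitiveGen W Adj X → X.Subsingleton ∨ X = W

/-- An isomorphism between the graphs `(Vα, Aα)` and `(Vβ, Aβ)`:
a bijection of the vertex sets preserving adjacency in both directions. -/
def GraphIso {α β : Type*} (Vα : Set α) (Aα : α → α → Prop)
    (Vβ : Set β) (Aβ : β → β → Prop) : Prop :=
  ∃ f : α → β, Set.BijOn f Vα Vβ ∧
    ∀ a ∈ Vα, ∀ b ∈ Vα, (Aα a b ↔ Aβ (f a) (f b))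

/-- `(V', E')` is a subgraph of the induced subgraph `G(W)` of `G = (V,E)`. -/
def IsSubgraphOf (E : Set (V × V)) (W : Set V) (V' : Set V) (E' : Set (V × V)) : Prop :=
  V' ⊆ W ∧ E' ⊆ edgesOn E W ∧ (∀ e ∈ E', e.1 ∈ V' ∧ e.2 ∈ V') ∧
    (∀ a b : V, (a, b) ∈ E' ↔ (b, a) ∈ E')

end TransOrient

namespace TransOrient

variable {V : Type*} {E : Set (V × V)}

/-- The implication class generated by a directed edge. -/
def cls (E : Set (V × V)) (e : V × V) : Set (V × V) :=
  {e' | Relation.ReflTransGen (Gamma E) e e'}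

lemma mem_cls_self (e : V × V) : e ∈ cls E e := Relation.ReflTransGen.refl

lemma gamma_symm (hG : IsGraph E) : Symmetric (Gamma E) := by
  rintro e e' ⟨h1, h2, h3 | h3⟩
  · exact ⟨h2, h1, Or.inl ⟨h3.1.symm, fun h => h3.2 ((hG.2 _ _).mp h)⟩⟩
  · exact ⟨h2, h1, Or.inr ⟨h3.1.symm, fun h => h3.2 ((hG.2 _ _).mp h)⟩⟩

lemma rtg_symm (hG : IsGraph E) {e e' : V × V}
    (h : Relation.ReflTransGen (Gamma E) e e') :
    Relation.ReflTransGen (Gamma E) e' e :=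
  by
    induction h with
    | refl => exact Relation.ReflTransGen.refl
    | tail _ hg ih => exact Relation.ReflTransGen.head (gamma_symm hG hg) ih

lemma cls_eq_of_mem (hG : IsGraph E) {e e' : V × V} (h : e' ∈ cls E e) :
    cls E e = cls E e' := by
  ext f
  exact ⟨fun hf => (rtg_symm hG h).trans hf, fun hf => h.trans hf⟩

lemma mem_E_of_mem_cls (hG : IsGraph E) {e₀ e : V × V} (h₀ : e₀ ∈ E)
    (h : e ∈ cls E e₀) : e ∈ E := by
  induction h with
  | refl => exact h₀
  | tail _ hg _ => exact hg.2.1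

lemma gamma_swap (hG : IsGraph E) {e e' : V × V} (h : Gamma E e e') :
    Gamma E e.swap e'.swap := by
  obtain ⟨h1, h2, h3 | h3⟩ := h
  · exact ⟨(hG.2 _ _).mp h1, (hG.2 _ _).mp h2, Or.inr ⟨h3.1, h3.2⟩⟩
  · exact ⟨(hG.2 _ _).mp h1, (hG.2 _ _).mp h2, Or.inl ⟨h3.1, h3.2⟩⟩

lemma rtg_swap (hG : IsGraph E) {e e' : V × V}
    (h : Relation.ReflTransGen (Gamma E) e e') :
    Relation.ReflTransGen (Gamma E) e.swap e'.swap := by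
  induction h with
  | refl => exact Relation.ReflTransGen.refl
  | tail _ hg ih => exact ih.tail (gamma_swap hG hg)

lemma inv_cls (hG : IsGraph E) (e : V × V) :
    inv (cls E e) = cls E e.swap := by
  ext f
  constructor
  · intro hf
    have : Relation.ReflTransGen (Gamma E) e (f.2, f.1) := hf
    have := rtg_swap hG this
    exact this
  · intro hf
    have : Relation.ReflTransGen (Gamma E) e.swap f := hf
    have := rtg_swap hG this
    exact this

lemma hat_cls_char (hG : IsGraph E) {e₀ e : V × V} (h : e ∈ hat (cls E e₀)) :
    hat (cls E e₀) = cls E e ∪ cls E e.swap := by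
  rcases h with h | h
  · have h1 : cls E e₀ = cls E e := cls_eq_of_mem hG h
    have h2 : cls E e₀.swap = cls E e.swap := cls_eq_of_mem hG (rtg_swap hG h)
    rw [hat, inv_cls hG, h1, h2]
  · have h' : e.swap ∈ cls E e₀ := h
    have h1 : cls E e₀ = cls E e.swap := cls_eq_of_mem hG h'
    have h2 : cls E e₀.swap = cls E e :=
      (cls_eq_of_mem hG (rtg_swap hG h')).trans (by simp)
    rw [hat, inv_cls hG, h1, h2, Set.union_comm]

lemma hat_cls_eq (hG : IsGraph E) {e₀ e₁ e : V × V}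
    (h₀ : e ∈ hat (cls E e₀)) (h₁ : e ∈ hat (cls E e₁)) :
    hat (cls E e₀) = hat (cls E e₁) := by
  rw [hat_cls_char hG h₀, hat_cls_char hG h₁]

lemma swap_mem_hat {A : Set (V × V)} {e : V × V} (h : e ∈ hat A) :
    e.swap ∈ hat A := by
  rcases h with h | h
  · exact Or.inr h
  · exact Or.inl h

/-- An implication class with an edge inside a partitive set stays inside it. -/
lemma cls_subset_module (hG : IsGraph E) {X : Set V} (hP : IsPartitive E X)
    {y z : V} (hy : y ∈ X) (hz : z ∈ X) {e : V × V} (h : e ∈ cls E (y, z)) :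
    e.1 ∈ X ∧ e.2 ∈ X := by
  induction h with
  | refl => exact ⟨hy, hz⟩
  | @tail b c hmem hg ih =>
    obtain ⟨h1, h2, h3 | h3⟩ := hg
    · refine ⟨h3.1 ▸ ih.1, ?_⟩
      by_contra hc
      have := hP b.1 ih.1 b.2 ih.2 c.2 hc
      have h2' : (c.1, c.2) ∈ E := h2
      rw [← h3.1] at h2'
      exact h3.2 (this.mp h2')
    · refine ⟨?_, h3.1 ▸ ih.2⟩
      by_contra hc
      have := hP b.2 ih.2 b.1 ih.1 c.1 hc
      have h2' : (c.1, c.2) ∈ E := h2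
      have h2'' : (c.2, c.1) ∈ E := (hG.2 _ _).mp h2'
      rw [← h3.1] at h2''
      exact h3.2 (this.mp h2'')

/-- Claim 1: endpoints of an edge of a class look alike to any vertex
outside the tilde of the class. -/
lemma claim1 (hG : IsGraph E) {e₀ e : V × V} (h₀ : e₀ ∈ E)
    (he : e ∈ cls E e₀) {c : V} (hc : c ∉ tilde (cls E e₀)) :
    ((e.1, c) ∈ E ↔ (e.2, c) ∈ E) := by
  have heE : e ∈ E := mem_E_of_mem_cls hG h₀ he
  constructor
  · intro h1
    by_contra h2
    have : Gamma E e (e.1, c) := ⟨heE, h1, Or.inl ⟨rfl, h2⟩⟩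
    exact hc ⟨e.1, Or.inr (he.tail this)⟩
  · intro h1
    by_contra h2
    have : Gamma E e (c, e.2) := ⟨heE, (hG.2 _ _).mp h1, Or.inr ⟨rfl, h2⟩⟩
    exact hc ⟨e.2, Or.inl (he.tail this)⟩

lemma claim2 (hG : IsGraph E) {e₀ e : V × V} (h₀ : e₀ ∈ E)
    (he : e ∈ cls E e₀) {c : V} (hc : c ∉ tilde (cls E e₀)) :
    ((e.1, c) ∈ E ↔ (e₀.1, c) ∈ E) := by
  induction he with
  | refl => exact Iff.rfl
  | @tail b d hmem hg ih =>
    obtain ⟨h1, h2, h3 | h3⟩ := hg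
    · rw [← h3.1]; exact ih
    · have hd : d ∈ cls E e₀ := hmem.tail ⟨h1, h2, Or.inr h3⟩
      calc (d.1, c) ∈ E ↔ (d.2, c) ∈ E := claim1 hG h₀ hd hc
        _ ↔ (b.2, c) ∈ E := by rw [h3.1]
        _ ↔ (b.1, c) ∈ E := (claim1 hG h₀ hmem hc).symm
        _ ↔ (e₀.1, c) ∈ E := ih

/-- Gallai: the vertex set of a color class is a partitive set. -/
lemma tilde_partitive (hG : IsGraph E) {e₀ : V × V} (h₀ : e₀ ∈ E) :
    IsPartitive E (tilde (cls E e₀)) := by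
  intro a ha b hb c hc
  have key : ∀ p ∈ tilde (cls E e₀), ((p, c) ∈ E ↔ (e₀.1, c) ∈ E) := by
    rintro p ⟨w, hw | hw⟩
    · exact claim2 hG h₀ hw hc
    · calc (p, c) ∈ E ↔ (w, c) ∈ E := (claim1 hG h₀ hw hc).symm
        _ ↔ (e₀.1, c) ∈ E := claim2 hG h₀ hw hc
  rw [key a ha, key b hb]

/-- Golumbic's Triangle Lemma. -/
lemma triangle (hG : IsGraph E) {a b c : V}
    (hbc : (b, c) ∈ E) (hab : (a, b) ∈ E) (hac : (a, c) ∈ E)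
    (hAB : hat (cls E (b, c)) ≠ hat (cls E (a, b)))
    (hAC : hat (cls E (b, c)) ≠ hat (cls E (a, c)))
    {e : V × V} (he : e ∈ cls E (b, c)) :
    (a, e.1) ∈ cls E (a, b) ∧ (a, e.2) ∈ cls E (a, c) := by
  induction he with
  | refl => exact ⟨mem_cls_self _, mem_cls_self _⟩
  | @tail p q hmem hg ih =>
    obtain ⟨h1, h2, h3 | h3⟩ := hg
    · -- q = (p.1, q.2), (p.2, q.2) ∉ E
      by_cases haq : (a, q.2) ∈ E
      · refine ⟨h3.1 ▸ ih.1, ?_⟩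
        have hap : (a, p.2) ∈ E := mem_E_of_mem_cls hG hac ih.2
        exact ih.2.tail ⟨hap, haq, Or.inl ⟨rfl, h3.2⟩⟩
      · exfalso
        have hq : q ∈ cls E (b, c) := hmem.tail ⟨h1, h2, Or.inl h3⟩
        have hpa : (p.1, a) ∈ E :=
          (hG.2 _ _).mp (mem_E_of_mem_cls hG hab ih.1)
        have hstep : Gamma E q (q.1, a) := by
          refine ⟨h2, ?_, Or.inl ⟨rfl, fun h => haq ((hG.2 _ _).mp h)⟩⟩
          rw [← h3.1]; exact hpa
        have h4 : (q.1, a) ∈ hat (cls E (b, c)) := Or.inl (hq.tail hstep)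
        have h5 : (q.1, a) ∈ hat (cls E (a, b)) := by
          rw [← h3.1]
          exact Or.inr ih.1
        exact hAB (hat_cls_eq hG h4 h5)
    · -- q = (q.1, p.2), (p.1, q.1) ∉ E
      by_cases haq : (a, q.1) ∈ E
      · refine ⟨?_, h3.1 ▸ ih.2⟩
        have hap : (a, p.1) ∈ E := mem_E_of_mem_cls hG hab ih.1
        exact ih.1.tail ⟨hap, haq, Or.inl ⟨rfl, h3.2⟩⟩
      · exfalso
        have hq : q ∈ cls E (b, c) := hmem.tail ⟨h1, h2, Or.inr h3⟩
        have hpa : (a, p.2) ∈ E := mem_E_of_mem_cls hG hac ih.2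
        have hstep : Gamma E q (a, q.2) := by
          refine ⟨h2, ?_, Or.inr ⟨rfl, fun h => haq ((hG.2 _ _).mp h)⟩⟩
          rw [← h3.1]; exact hpa
        have h4 : (a, q.2) ∈ hat (cls E (b, c)) := Or.inl (hq.tail hstep)
        have h5 : (a, q.2) ∈ hat (cls E (a, c)) := by
          rw [← h3.1]
          exact Or.inl ih.2
        exact hAC (hat_cls_eq hG h4 h5)

/-- Two edges from an external vertex into a strong partitive set have the
same color class. -/
lemma same_color_main (hG : IsGraph E) {X : Set V} (hX : IsStrongPartitive E X)
    {u x x' : V} (hu : u ∉ X) (hx : x ∈ X) (hx' : x' ∈ X)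
    (hux : (u, x) ∈ E) (hux' : (u, x') ∈ E) :
    hat (cls E (u, x)) = hat (cls E (u, x')) := by
  by_contra hne
  -- x and x' must be adjacent
  have hxx' : (x, x') ∈ E := by
    by_contra h
    have : (u, x') ∈ cls E (u, x) :=
      Relation.ReflTransGen.single ⟨hux, hux', Or.inl ⟨rfl, h⟩⟩
    exact hne (by rw [cls_eq_of_mem hG this])
  -- x' is in the tilde of the class of (u,x), by strongness
  have htp : IsPartitive E (tilde (cls E (u, x))) := tilde_partitive hG hux
  have hxT : x ∈ tilde (cls E (u, x)) := ⟨u, Or.inr (mem_cls_self _)⟩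
  have huT : u ∈ tilde (cls E (u, x)) := ⟨x, Or.inl (mem_cls_self _)⟩
  have hx'T : x' ∈ tilde (cls E (u, x)) := by
    rcases hX.2 _ htp ⟨x, hxT, hx⟩ with h | h
    · exact h hx'
    · exact absurd (h huT) hu
  obtain ⟨w, hw⟩ := hx'T
  by_cases hBD : hat (cls E (u, x)) = hat (cls E (x', u))
  · -- then (u,x') is in both hats, contradiction
    have h1 : (u, x') ∈ hat (cls E (u, x)) := by
      rw [hBD]
      exact swap_mem_hat (Or.inl (mem_cls_self ((x', u) : V × V)))
    have h2 : (u, x') ∈ hat (cls E (u, x')) := Or.inl (mem_cls_self _)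
    exact hne (hat_cls_eq hG h1 h2)
  · have hAC : hat (cls E (u, x)) ≠ hat (cls E (x', x)) := by
      intro h
      have h1 : (u, x) ∈ hat (cls E (x', x)) := by
        rw [← h]; exact Or.inl (mem_cls_self _)
      rcases h1 with h1 | h1
      · exact hu (cls_subset_module hG hX.1 hx' hx h1).1
      · exact hu (cls_subset_module hG hX.1 hx' hx h1).2
    have hx'u : (x', u) ∈ E := (hG.2 _ _).mp hux'
    have hx'x : (x', x) ∈ E := (hG.2 _ _).mp hxx'
    rcases hw with hw | hw
    · have := (triangle hG hux hx'u hx'x hBD hAC hw).1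
      exact hG.1 x' (mem_E_of_mem_cls hG hx'u this)
    · have := (triangle hG hux hx'u hx'x hBD hAC hw).2
      exact hG.1 x' (mem_E_of_mem_cls hG hx'x this)

end TransOrient

open TransOrient in
/-- **(Corollary 3.6)** If `X` is a strong partitive set with `X ≠ V` and
`u ∈ V ∖ X`, then either `u` is adjacent to no vertex of `X`, or there is a
color class `Â` so that `(u,x) ∈ Â` for every `x ∈ X`. -/
theorem external_vertex_one_color_to_strong_partitive
    {V : Type*} (E : Set (V × V)) (hG : IsGraph E)
    (X : Set V) (hX : IsStrongPartitive E X) (hXV : X ≠ Set.univ)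
    (u : V) (hu : u ∉ X) :
    (∀ x ∈ X, (u, x) ∉ E) ∨
      ∃ A : Set (V × V), IsImplicationClass E A ∧ ∀ x ∈ X, (u, x) ∈ hat A := by
  by_cases h : ∃ x ∈ X, (u, x) ∈ E
  · obtain ⟨x₀, hx₀, he⟩ := h
    right
    refine ⟨cls E (u, x₀), ⟨(u, x₀), he, rfl⟩, ?_⟩
    intro x hx
    have hux : (u, x) ∈ E := by
      have h1 : (x₀, u) ∈ E := (hG.2 u x₀).mp he
      have h2 := (hX.1 x₀ hx₀ x hx u hu).mp h1
      exact (hG.2 x u).mp h2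
    have hsame := same_color_main hG hX hu hx₀ hx he hux
    rw [hsame]
    exact Or.inl (mem_cls_self _)
  · left
    intro x hx hux
    exact h ⟨x, hx, hux⟩
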